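/- Let Q be a probability distribution on ℝ with finite second moment and τ ∈ (0,1). The inner risk C_{L_τ,Q}(t) = ∫ L_τ(y,t) dQ(y) is differentiable in t with derivative C'_{L_τ,Q}(t) = -2τ ∫_{y ≥ t}(y-t) dQ(y) + 2(1-τ) ∫_{y < t}(t-y) dQ(y). -/

import Mathlib

open MeasureTheory

noncomputable def alsLoss (τ y t : ℝ) : ℝ :=
  if y < t then (1 - τ) * (y - t) ^ 2 else τ * (y - t) ^ 2

noncomputable def alsDer (τ y s : ℝ) : ℝ :=
  if y < s then 2 * (1 - τ) * (s - y) else -2 * τ * (y - s)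

lemma alsLoss_hasDerivAt (τ y s : ℝ) (hτ : τ ∈ Set.Ioo (0 : ℝ) 1) :
    HasDerivAt (fun s' => alsLoss τ y s') (alsDer τ y s) s := by
  rcases lt_trichotomy y s with h | h | h
  · have h1 : HasDerivAt (fun s' : ℝ => (1 - τ) * (y - s') ^ 2)
        (2 * (1 - τ) * (s - y)) s := by
      have := (((hasDerivAt_id s).const_sub y).pow 2).const_mul (1 - τ)
      exact this.congr_deriv (by simp only [id_eq]; ring)
    have heq : (fun s' => alsLoss τ y s') =ᶠ[nhds s]
        (fun s' : ℝ => (1 - τ) * (y - s') ^ 2) := by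
      filter_upwards [eventually_gt_nhds h] with s' hs'
      simp [alsLoss, hs']
    have := h1.congr_of_eventuallyEq heq
    simpa [alsDer, h] using this
  · -- y = s
    subst h
    have hder : alsDer τ y y = 0 := by simp [alsDer]
    rw [hder, hasDerivAt_iff_tendsto_slope]
    have hbound : ∀ s' : ℝ, ‖slope (fun s' => alsLoss τ y s') y s'‖ ≤ |s' - y| := by
      intro s'
      rcases eq_or_ne s' y with rfl | hne
      · simp [slope]
      · have hF0 : alsLoss τ y y = 0 := by simp [alsLoss]
        have hFle : |alsLoss τ y s'| ≤ (y - s') ^ 2 := by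
          rw [alsLoss]
          split_ifs with h
          · rw [abs_of_nonneg (by nlinarith [hτ.2, sq_nonneg (y - s')])]
            nlinarith [hτ.1, sq_nonneg (y - s')]
          · rw [abs_of_nonneg (by nlinarith [hτ.1, sq_nonneg (y - s')])]
            nlinarith [hτ.2, sq_nonneg (y - s')]
        have hne' : s' - y ≠ 0 := sub_ne_zero.mpr hne
        rw [slope_def_field, hF0, sub_zero, Real.norm_eq_abs, abs_div,
          div_le_iff₀ (by positivity : (0:ℝ) < |s' - y|)]
        calc |alsLoss τ y s'| ≤ (y - s') ^ 2 := hFle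
          _ = |s' - y| * |s' - y| := by
              rw [← abs_mul]; rw [abs_of_nonneg (by nlinarith [sq_nonneg (s' - y)])]; ring
    apply squeeze_zero_norm hbound
    have : Filter.Tendsto (fun s' : ℝ => |s' - y|) (nhds y) (nhds 0) := by
      have : Continuous fun s' : ℝ => |s' - y| := by continuity
      simpa using this.tendsto y
    exact this.mono_left nhdsWithin_le_nhds
  · have h1 : HasDerivAt (fun s' : ℝ => τ * (y - s') ^ 2)
        (-2 * τ * (y - s)) s := by
      have := (((hasDerivAt_id s).const_sub y).pow 2).const_mul τ
      exact this.congr_deriv (by simp only [id_eq]; ring)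
    have heq : (fun s' => alsLoss τ y s') =ᶠ[nhds s]
        (fun s' : ℝ => τ * (y - s') ^ 2) := by
      filter_upwards [eventually_lt_nhds h] with s' hs'
      simp [alsLoss, not_lt.mpr hs'.le]
    have := h1.congr_of_eventuallyEq heq
    simpa [alsDer, not_lt.mpr h.le] using this

theorem inner_risk_hasDerivAt (Q : Measure ℝ) [IsProbabilityMeasure Q]
    (hQ2 : Integrable (fun y : ℝ => y ^ 2) Q)
    (τ : ℝ) (hτ : τ ∈ Set.Ioo (0 : ℝ) 1) :
    ∀ t : ℝ, HasDerivAt (fun s : ℝ => ∫ y, alsLoss τ y s ∂Q)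
      (-2 * τ * (∫ y in Set.Ici t, (y - t) ∂Q)
        + 2 * (1 - τ) * ∫ y in Set.Iio t, (t - y) ∂Q) t := by
  intro t
  -- basic integrability
  have hQ1 : Integrable (fun y : ℝ => y) Q := by
    refine (hQ2.add (integrable_const 1)).mono' ?_ ?_
    · exact measurable_id.aestronglyMeasurable
    · filter_upwards with y
      have : |y| ≤ y ^ 2 + 1 := by nlinarith [sq_nonneg (|y| - 1), sq_abs y]
      simpa [Real.norm_eq_abs] using this
  have hsq : Integrable (fun y : ℝ => (y - t) ^ 2) Q := by
    have : Integrable (fun y : ℝ => y ^ 2 + ((-2 * t) * y + t ^ 2)) Q :=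
      hQ2.add ((hQ1.const_mul (-2 * t)).add (integrable_const (t ^ 2)))
    exact this.congr (by filter_upwards with y; ring)
  set bound : ℝ → ℝ := fun y => 2 * (|y| + |t| + 1) with hbound_def
  have hbound_int : Integrable bound Q :=
    ((hQ1.abs.add (integrable_const |t|)).add (integrable_const 1)).const_mul 2
  have hmeasL : ∀ s : ℝ, AEStronglyMeasurable (fun y => alsLoss τ y s) Q := by
    intro s
    apply Measurable.aestronglyMeasurable
    apply Measurable.ite (measurableSet_Iio)
    · exact ((measurable_id.sub_const s).pow_const 2).const_mul _
    · exact ((measurable_id.sub_const s).pow_const 2).const_mul _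
  have hF'meas : AEStronglyMeasurable (fun y => alsDer τ y t) Q := by
    apply Measurable.aestronglyMeasurable
    apply Measurable.ite (measurableSet_Iio)
    · exact (measurable_const.sub measurable_id).const_mul _
    · exact (measurable_id.sub_const t).const_mul _
  have hFint : Integrable (fun y => alsLoss τ y t) Q := by
    refine hsq.mono' (hmeasL t) ?_
    filter_upwards with y
    rw [Real.norm_eq_abs, alsLoss]
    split_ifs with h
    · rw [abs_of_nonneg (by nlinarith [hτ.2, sq_nonneg (y - t)])]
      nlinarith [hτ.1, sq_nonneg (y - t)]
    · rw [abs_of_nonneg (by nlinarith [hτ.1, sq_nonneg (y - t)])]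
      nlinarith [hτ.2, sq_nonneg (y - t)]
  have hlip : ∀ᵐ y ∂Q, LipschitzOnWith (Real.nnabs (bound y))
      (fun s => alsLoss τ y s) (Metric.ball t 1) := by
    filter_upwards with y
    apply (convex_ball t 1).lipschitzOnWith_of_nnnorm_hasDerivWithin_le
      (f' := fun s => alsDer τ y s)
    · intro x hx
      exact (alsLoss_hasDerivAt τ y x hτ).hasDerivWithinAt
    · intro x hx
      have hx' : |x - t| < 1 := by
        simpa [Real.dist_eq] using (Metric.mem_ball.mp hx)
      have hxb : |x| ≤ |t| + 1 := by
        have := abs_sub_abs_le_abs_sub x t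
        linarith
      rw [← NNReal.coe_le_coe]
      have h1 : (Real.nnabs (bound y) : ℝ) = |bound y| := Real.coe_nnabs _
      rw [h1]
      have h2 : (‖alsDer τ y x‖₊ : ℝ) = |alsDer τ y x| := rfl
      rw [h2]
      have hd : |alsDer τ y x| ≤ 2 * |y - x| := by
        rw [alsDer]
        split_ifs with h
        · rw [abs_mul, abs_mul]
          have : |(2:ℝ)| * |1 - τ| ≤ 2 := by
            rw [abs_of_nonneg (by norm_num : (0:ℝ) ≤ 2),
              abs_of_nonneg (by linarith [hτ.2])]
            nlinarith [hτ.1]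
          have h3 : |x - y| = |y - x| := abs_sub_comm x y
          nlinarith [abs_nonneg (x - y), abs_nonneg (y - x)]
        · rw [abs_mul, abs_mul]
          have : |(-2:ℝ)| * |τ| ≤ 2 := by
            have h2 : |(-2:ℝ)| = 2 := by norm_num
            rw [h2, abs_of_nonneg (le_of_lt hτ.1)]
            nlinarith [hτ.2]
          nlinarith [abs_nonneg (y - x)]
      have : 2 * |y - x| ≤ |bound y| := by
        rw [hbound_def]
        have hyx : |y - x| ≤ |y| + |x| := abs_sub y x
        have : |2 * (|y| + |t| + 1)| = 2 * (|y| + |t| + 1) := by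
          rw [abs_of_nonneg]; positivity
        rw [this]
        nlinarith [abs_nonneg y]
      linarith
  have hdiff : ∀ᵐ y ∂Q, HasDerivAt (fun s => alsLoss τ y s) (alsDer τ y t) t := by
    filter_upwards with y
    exact alsLoss_hasDerivAt τ y t hτ
  obtain ⟨hF'int, hder⟩ := hasDerivAt_integral_of_dominated_loc_of_lip
    (F := fun s y => alsLoss τ y s) (x₀ := t) (bound := bound)
    (Metric.ball_mem_nhds t one_pos) (Filter.Eventually.of_forall hmeasL) hFint hF'meas hlip hbound_int hdiff
  refine hder.congr_deriv ?_
  -- compute the integral of the derivative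
  have hsplit : (∫ y in Set.Iio t, alsDer τ y t ∂Q) + (∫ y in Set.Ici t, alsDer τ y t ∂Q)
      = ∫ y, alsDer τ y t ∂Q :=
    intervalIntegral.integral_Iio_add_Ici hF'int.integrableOn hF'int.integrableOn
  rw [← hsplit]
  have h1 : (∫ y in Set.Iio t, alsDer τ y t ∂Q)
      = 2 * (1 - τ) * ∫ y in Set.Iio t, (t - y) ∂Q := by
    rw [← integral_const_mul]
    apply setIntegral_congr_fun measurableSet_Iio
    intro y hy
    simp only [alsDer, if_pos (Set.mem_Iio.mp hy)]
  have h2 : (∫ y in Set.Ici t, alsDer τ y t ∂Q)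
      = -2 * τ * ∫ y in Set.Ici t, (y - t) ∂Q := by
    rw [← integral_const_mul]
    apply setIntegral_congr_fun measurableSet_Ici
    intro y hy
    simp only [alsDer, if_neg (not_lt.mpr (Set.mem_Ici.mp hy))]
  rw [h1, h2]
  ring
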